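/- Let G be a graph with an RSP-relation R, let φ be a class of R, and let G_φ^x and G_φ^y be two distinct adjacent φ-layers. Define the graph C whose vertices are the edges [a,b] of G with a ∈ V(G_φ^x), b ∈ V(G_φ^y), and where [a₁,b₁] and [a₂,b₂] are adjacent if they are opposite edges of a square a₁−b₁−b₂−a₂ in G with [a₁,a₂] ∈ E(G_φ^x) and [b₁,b₂] ∈ E(G_φ^y). Then the map f₁ sending [a,b] to a is a locally surjective graph homomorphism from C to G_φ^x, i.e., C is a quasi-cover of G_φ^x. -/

import Mathlib

open SimpleGraph

variable {V : Type*}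

/-- An equivalence relation on a set `E` of edges: reflexive on `E`, symmetric, transitive,
and only relating elements of `E`. -/
structure IsEquivOn (R : Sym2 V → Sym2 V → Prop) (E : Set (Sym2 V)) : Prop where
  refl : ∀ e ∈ E, R e e
  symm : ∀ {e f}, R e f → R f e
  trans : ∀ {e f g}, R e f → R f g → R e g
  mem_left : ∀ {e f}, R e f → e ∈ E
  mem_right : ∀ {e f}, R e f → f ∈ E

/-- `R` is an RSP-relation on `G`: an equivalence relation on `E(G)` such that any two adjacent
edges in distinct classes span a square (4-cycle) with opposite edges in the same class. -/
def IsRSP (G : SimpleGraph V) (R : Sym2 V → Sym2 V → Prop) : Prop :=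
  IsEquivOn R G.edgeSet ∧
  ∀ x y z : V, G.Adj x y → G.Adj x z → y ≠ z → ¬ R s(x, y) s(x, z) →
    ∃ w : V, w ≠ x ∧ w ≠ y ∧ w ≠ z ∧ G.Adj y w ∧ G.Adj z w ∧
      R s(x, y) s(z, w) ∧ R s(x, z) s(y, w)

/-- A finest RSP-relation: an RSP-relation such that every finer RSP-relation coincides
with it. -/
def IsFinestRSP (G : SimpleGraph V) (R : Sym2 V → Sym2 V → Prop) : Prop :=
  IsRSP G R ∧ ∀ S : Sym2 V → Sym2 V → Prop, IsRSP G S →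
    (∀ e f, S e f → R e f) → (∀ e f, R e f → S e f)

/-- The graph `C_{G_φ^x, G_φ^y}`: vertices are the edges of `G` joining the `φ`-layer of `x`
to the `φ`-layer of `y` (encoded as ordered pairs with first endpoint in the layer of `x`);
two such edges are adjacent iff they are opposite edges of a square whose other two opposite
edges lie in `φ`, one in each layer. -/
def coverGraph (G : SimpleGraph V) (φ : Set (Sym2 V)) (x y : V) :
    SimpleGraph {p : V × V //
      (G.deleteEdges φᶜ).Reachable x p.1 ∧ (G.deleteEdges φᶜ).Reachable y p.2 ∧
      G.Adj p.1 p.2} where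
  Adj p q :=
    G.Adj p.1.1 q.1.1 ∧ s(p.1.1, q.1.1) ∈ φ ∧ G.Adj p.1.2 q.1.2 ∧ s(p.1.2, q.1.2) ∈ φ
  symm := ⟨by
    rintro p q ⟨h1, h2, h3, h4⟩
    exact ⟨h1.symm, by rwa [Sym2.eq_swap], h3.symm, by rwa [Sym2.eq_swap]⟩⟩
  loopless := ⟨by
    rintro p ⟨h1, -⟩
    exact G.loopless.irrefl _ h1⟩

/-- For an RSP-relation `R` on `G`, a class `φ` of `R`, and two distinct adjacent `φ`-layers,
the map `[a,b] ↦ a` is a locally surjective homomorphism from `C_{G_φ^x,G_φ^y}` to the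
layer `G_φ^x`; i.e., `C_{G_φ^x,G_φ^y}` is a quasi-cover of `G_φ^x`. -/
theorem stmt12 (G : SimpleGraph V) (R : Sym2 V → Sym2 V → Prop) (hR : IsRSP G R)
    (e₀ : Sym2 V) (he₀ : e₀ ∈ G.edgeSet) (x y : V)
    (hdist : ¬ (G.deleteEdges {e | R e₀ e}ᶜ).Reachable x y)
    (hadj : ∃ a b : V, (G.deleteEdges {e | R e₀ e}ᶜ).Reachable x a ∧
      (G.deleteEdges {e | R e₀ e}ᶜ).Reachable y b ∧ G.Adj a b) :
    (∀ p q, (coverGraph G {e | R e₀ e} x y).Adj p q →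
      (G.deleteEdges {e | R e₀ e}ᶜ).Adj p.val.1 q.val.1) ∧
    (∀ p (c : V), (G.deleteEdges {e | R e₀ e}ᶜ).Adj p.val.1 c →
      ∃ q, (coverGraph G {e | R e₀ e} x y).Adj p q ∧ q.val.1 = c) := by
  set φ : Set (Sym2 V) := {e | R e₀ e} with hφ
  constructor
  · rintro p q ⟨h1, h2, -, -⟩
    rw [SimpleGraph.deleteEdges_adj]
    exact ⟨h1, fun hc => hc h2⟩
  · rintro ⟨⟨a, b⟩, hxa, hyb, hab⟩ c hac
    rw [SimpleGraph.deleteEdges_adj] at hac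
    obtain ⟨hac, hacφ⟩ := hac
    simp only [Set.mem_compl_iff, not_not] at hacφ
    -- hacφ : s(a,c) ∈ φ, i.e. R e₀ s(a,c)
    have hxc : (G.deleteEdges φᶜ).Reachable x c :=
      hxa.trans (SimpleGraph.Adj.reachable (by
        rw [SimpleGraph.deleteEdges_adj]
        exact ⟨hac, by simpa using hacφ⟩))
    -- key: ¬ R s(a,b) s(a,c)
    have hkey : ¬ R s(a, b) s(a, c) := by
      intro hrel
      have habφ : s(a, b) ∈ φ := hR.1.trans hacφ (hR.1.symm hrel)
      exact hdist (hxa.trans ((SimpleGraph.Adj.reachable (by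
        rw [SimpleGraph.deleteEdges_adj]
        exact ⟨hab, by simpa using habφ⟩)).trans hyb.symm))
    have hbc : b ≠ c := by
      rintro rfl
      exact hkey (hR.1.refl _ (G.mem_edgeSet.2 hab))
    obtain ⟨w, -, -, -, hbw, hcw, hrel1, hrel2⟩ := hR.2 a b c hab hac hbc hkey
    have hbwφ : s(b, w) ∈ φ := hR.1.trans hacφ hrel2
    have hyw : (G.deleteEdges φᶜ).Reachable y w :=
      hyb.trans (SimpleGraph.Adj.reachable (by
        rw [SimpleGraph.deleteEdges_adj]
        exact ⟨hbw, by simpa using hbwφ⟩))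
    exact ⟨⟨(c, w), hxc, hyw, hcw⟩, ⟨hac, hacφ, hbw, hbwφ⟩, rfl⟩
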